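/- (Invariant kernel via a single orbit point) Assume the kernel k is unitary with respect to G. Then for all x, y ∈ E and every fixed g' ∈ G, k_Ψ(x,y) = ⟨φ(g'x), Φ(y)⟩; in particular k_Ψ(x,y) = ⟨φ(x), Φ(y)⟩ = ∫_G k(x, gy) dμ(g), so evaluating the invariant kernel requires observing only a single arbitrary point on the orbit of x. -/

import Mathlib

open MeasureTheory RealInnerProductSpace

/-- Invariant kernel via a single orbit point: for a unitary kernel,
`k_Ψ(x,y) = ⟪Φ x, Φ y⟫` satisfies `k_Ψ(x,y) = ⟪φ(g'x), Φ y⟫` for every fixed `g' ∈ G`;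
in particular `k_Ψ(x,y) = ⟪φ x, Φ y⟫ = ∫_G k(x, gy) dμ(g)`. -/
theorem invariant_kernel_single_orbit_point
    {E : Type*} [NormedAddCommGroup E] [InnerProductSpace ℝ E] [FiniteDimensional ℝ E]
    {G : Type*} [Group G] [TopologicalSpace G] [IsTopologicalGroup G] [CompactSpace G]
    [MeasurableSpace G] [BorelSpace G]
    (μ : Measure G) [IsProbabilityMeasure μ] [μ.IsMulLeftInvariant] [μ.IsMulRightInvariant]
    [μ.IsInvInvariant]
    (ρ : G →* (E ≃ₗᵢ[ℝ] E)) (hρ : Continuous fun p : G × E => ρ p.1 p.2)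
    {H : Type*} [NormedAddCommGroup H] [InnerProductSpace ℝ H] [CompleteSpace H]
    (φ : E → H) (hφ : Continuous φ)
    (hunitary : ∀ (g : G) (x y : E), ⟪φ (ρ g x), φ (ρ g y)⟫ = ⟪φ x, φ y⟫)
    (Φ : E → H) (hΦ : ∀ x : E, Φ x = ∫ g, φ (ρ g x) ∂μ)
    (kΨ : E → E → ℝ) (hkΨ : ∀ x y : E, kΨ x y = ⟪Φ x, Φ y⟫) :
    ∀ (x y : E) (g' : G),
      kΨ x y = ⟪φ (ρ g' x), Φ y⟫ ∧
      kΨ x y = ⟪φ x, Φ y⟫ ∧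
      kΨ x y = ∫ g, ⟪φ x, φ (ρ g y)⟫ ∂μ := by
  -- integrability of orbit maps
  have horb : ∀ z : E, Continuous fun g : G => φ (ρ g z) := fun z =>
    hφ.comp (hρ.comp (continuous_id.prodMk continuous_const))
  have hint : ∀ z : E, Integrable (fun g : G => φ (ρ g z)) μ := fun z =>
    (horb z).integrable_of_hasCompactSupport (HasCompactSupport.of_compactSpace _)
  intro x y g'
  -- main claim: for every g', ⟪φ (ρ g' x), Φ y⟫ = ∫ g, ⟪φ x, φ (ρ g y)⟫
  have comp : ∀ (a b : G) (z : E), ρ a (ρ b z) = ρ (a * b) z := fun a b z => by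
    rw [map_mul]; rfl
  have key : ∀ h : G, ⟪φ (ρ h x), Φ y⟫ = ∫ g, ⟪φ x, φ (ρ g y)⟫ ∂μ := by
    intro h
    rw [hΦ, ← integral_inner (hint y)]
    have step : ∀ g : G, ⟪φ (ρ h x), φ (ρ g y)⟫ = ⟪φ x, φ (ρ (h⁻¹ * g) y)⟫ := by
      intro g
      rw [← hunitary h⁻¹ (ρ h x) (ρ g y), comp, comp, inv_mul_cancel, map_one]
      rfl
    simp_rw [step]
    exact integral_mul_left_eq_self (fun g => ⟪φ x, φ (ρ g y)⟫) h⁻¹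
  have key1 : ⟪φ x, Φ y⟫ = ∫ g, ⟪φ x, φ (ρ g y)⟫ ∂μ := by
    have := key 1
    simpa using this
  have hk : kΨ x y = ∫ g, ⟪φ x, φ (ρ g y)⟫ ∂μ := by
    rw [hkΨ, hΦ x, real_inner_comm, ← integral_inner (hint x)]
    have step2 : ∀ g : G, ⟪Φ y, φ (ρ g x)⟫ = ∫ g, ⟪φ x, φ (ρ g y)⟫ ∂μ := fun g => by
      rw [real_inner_comm]; exact key g
    simp_rw [step2]
    simp [measure_univ]
  exact ⟨by rw [hk, ← key g'], by rw [hk, ← key1], hk⟩
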